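/- For the task set of Theorem 2 (K ≥ 4 an integer, H > K^K, tasks as defined there, indexed in deadline-monotonic order), the deadline-monotonic partitioning algorithm with the best-fit strategy and the schedulability tests C_i + Σ_{τ_j ∈ T_m} dbf*(τ_j, D_i) ≤ D_i and u_i + Σ_{τ_j ∈ T_m} u_j ≤ 1 assigns task τᵢ to processor ⌈i/2⌉, and hence uses K = N/2 processors. -/

import Mathlib

/-- Approximate demand bound function of a sporadic task (C, T, D) at time t. -/
noncomputable def dbfStar (C T D t : ℝ) : ℝ :=
  if t < D then 0 else ((t - D) / T + 1) * C

/-- Execution time of task i in the task set of Theorem 2. -/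
noncomputable def Cbf (K : ℕ) (i : ℕ) : ℝ :=
  if i = 1 then 1 / K
  else if i % 2 = 0 then (K : ℝ) ^ ((i : ℤ) / 2 - 2)
  else (K : ℝ) ^ (((i : ℤ) - 1) / 2) - (K : ℝ) ^ (((i : ℤ) - 1) / 2 - 1)

/-- Relative deadline of task i in the task set of Theorem 2. -/
noncomputable def Dbf (K : ℕ) (i : ℕ) : ℝ :=
  if i = 1 then 1
  else if i % 2 = 0 then (K : ℝ) ^ ((i : ℤ) / 2 - 1)
  else (K : ℝ) ^ (((i : ℤ) - 1) / 2)

/-- Period of task i in the task set of Theorem 2 (H for odd i, = deadline for even i). -/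
noncomputable def Tbf (K : ℕ) (H : ℝ) (i : ℕ) : ℝ :=
  if i % 2 = 0 then Dbf K i else H

/-- The claimed best-fit assignment: task i is assigned to processor ⌈i/2⌉. -/
def assign (i : ℕ) : ℕ := (i + 1) / 2

/-- Approximate demand on processor m at time `Dbf K i` from tasks 1..i-1 assigned by
`assign`, i.e. the load considered when task i is being placed. -/
noncomputable def load (K : ℕ) (H : ℝ) (m i : ℕ) : ℝ :=
  ∑ j ∈ (Finset.Icc 1 (i - 1)).filter (fun j => assign j = m),
    dbfStar (Cbf K j) (Tbf K H j) (Dbf K j) (Dbf K i)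

/-- Utilization of processor m from tasks 1..i-1 assigned by `assign`. -/
noncomputable def utilLoad (K : ℕ) (H : ℝ) (m i : ℕ) : ℝ :=
  ∑ j ∈ (Finset.Icc 1 (i - 1)).filter (fun j => assign j = m),
    Cbf K j / Tbf K H j

/-- Both schedulability tests (approximate demand bound and utilization bound) pass when
task i is tentatively placed on processor m. -/
noncomputable def feasible (K : ℕ) (H : ℝ) (m i : ℕ) : Prop :=
  Cbf K i + load K H m i ≤ Dbf K i ∧
  Cbf K i / Tbf K H i + utilLoad K H m i ≤ 1

/- ### Auxiliary lemmas -/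

lemma filter_assign (m n : ℕ) (hm : 1 ≤ m) :
    (Finset.Icc 1 n).filter (fun j => assign j = m) =
    if 2*m ≤ n then {2*m - 1, 2*m} else if 2*m - 1 ≤ n then {2*m - 1} else ∅ := by
  split_ifs <;> ext j <;> simp only [Finset.mem_filter] <;>
    simp only [Finset.mem_filter, Finset.mem_Icc, assign, Finset.mem_insert,
      Finset.mem_singleton, Finset.notMem_empty, iff_false, not_and] <;> omega

lemma Cbf_even (K m : ℕ) : Cbf K (2*m) = (K:ℝ) ^ ((m:ℤ) - 2) := by
  unfold Cbf
  rw [if_neg (by omega), if_pos (by omega),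
    show ((2*m : ℕ) : ℤ)/2 - 2 = (m:ℤ) - 2 by push_cast; omega]

lemma Dbf_even (K m : ℕ) : Dbf K (2*m) = (K:ℝ) ^ ((m:ℤ) - 1) := by
  unfold Dbf
  rw [if_neg (by omega), if_pos (by omega),
    show ((2*m : ℕ) : ℤ)/2 - 1 = (m:ℤ) - 1 by push_cast; omega]

lemma Tbf_even (K : ℕ) (H : ℝ) (m : ℕ) :
    Tbf K H (2*m) = (K:ℝ) ^ ((m:ℤ) - 1) := by
  rw [Tbf, if_pos (by omega), Dbf_even]

lemma Tbf_odd (K : ℕ) (H : ℝ) (m : ℕ) (hm : 1 ≤ m) : Tbf K H (2*m - 1) = H := by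
  rw [Tbf, if_neg (by omega)]

lemma Dbf_odd (K m : ℕ) (hm : 1 ≤ m) :
    Dbf K (2*m - 1) = (K:ℝ) ^ ((m:ℤ) - 1) := by
  unfold Dbf
  rcases eq_or_lt_of_le hm with h | h
  · rw [if_pos (by omega)]
    simp [← h]
  · rw [if_neg (by omega), if_neg (by omega),
      show (((2*m - 1 : ℕ) : ℤ) - 1)/2 = (m:ℤ) - 1 by omega]

lemma Cbf_odd (K m : ℕ) (hm : 2 ≤ m) :
    Cbf K (2*m - 1) = (K:ℝ) ^ ((m:ℤ) - 1) - (K:ℝ) ^ ((m:ℤ) - 2) := by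
  unfold Cbf
  rw [if_neg (by omega), if_neg (by omega),
    show (((2*m - 1 : ℕ) : ℤ) - 1)/2 = (m:ℤ) - 1 by omega,
    show (m:ℤ) - 1 - 1 = (m:ℤ) - 2 by ring]

lemma Cbf_one (K : ℕ) : Cbf K 1 = (K:ℝ) ^ (-1 : ℤ) := by
  simp [Cbf, zpow_neg]

lemma dbfStar_of_le (C T D t : ℝ) (h : D ≤ t) :
    dbfStar C T D t = ((t - D) / T + 1) * C := by
  rw [dbfStar, if_neg (not_lt.mpr h)]

lemma even_term (x : ℝ) (hx : 0 < x) (b a : ℤ) :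
    ((x^a - x^(b-1))/x^(b-1) + 1) * x^(b-2) = x^(a-1) := by
  have hb : (0:ℝ) < x^(b-1) := zpow_pos hx _
  have h1 : (x^a - x^(b-1))/x^(b-1) + 1 = x^a/x^(b-1) := by
    field_simp
    ring
  rw [h1, div_mul_eq_mul_div, ← zpow_add₀ (ne_of_gt hx), ← zpow_sub₀ (ne_of_gt hx)]
  congr 1
  ring

lemma Codd_pos (K m : ℕ) (hK : 2 ≤ K) (hm : 1 ≤ m) : 0 < Cbf K (2*m - 1) := by
  have hx : (2:ℝ) ≤ K := by exact_mod_cast hK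
  have hx0 : (0:ℝ) < K := by linarith
  rcases eq_or_lt_of_le hm with h | h
  · rw [show 2*m - 1 = 1 by omega, Cbf_one]
    exact zpow_pos hx0 _
  · rw [Cbf_odd K m (by omega), sub_pos]
    exact zpow_lt_zpow_right₀ (by linarith) (by omega)

lemma Codd_le (K m : ℕ) (hK : 2 ≤ K) (hm : 1 ≤ m) :
    Cbf K (2*m - 1) ≤ (K:ℝ) ^ ((m:ℤ) - 1) := by
  have hx : (2:ℝ) ≤ K := by exact_mod_cast hK
  have hx0 : (0:ℝ) < K := by linarith
  rcases eq_or_lt_of_le hm with h | h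
  · rw [show 2*m - 1 = 1 by omega, Cbf_one]
    exact zpow_le_zpow_right₀ (by linarith) (by omega)
  · rw [Cbf_odd K m (by omega)]
    have : (0:ℝ) < (K:ℝ) ^ ((m:ℤ) - 2) := zpow_pos hx0 _
    linarith

lemma Codd_le' (K m : ℕ) (hK : 4 ≤ K) (hm : 1 ≤ m) :
    Cbf K (2*m - 1) ≤ (K:ℝ) ^ ((m:ℤ) - 1) - (K:ℝ) ^ ((m:ℤ) - 2) := by
  have hx : (4:ℝ) ≤ K := by exact_mod_cast hK
  have hx0 : (0:ℝ) < K := by linarith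
  rcases eq_or_lt_of_le hm with h | h
  · rw [show 2*m - 1 = 1 by omega, Cbf_one, ← h]
    have h1 : ((1:ℕ):ℤ) - 1 = 0 := by norm_num
    have h2 : ((1:ℕ):ℤ) - 2 = -1 := by norm_num
    rw [h1, h2, zpow_zero, zpow_neg_one]
    have hinv : (K:ℝ)⁻¹ ≤ 1/4 := by
      rw [inv_eq_one_div]
      apply div_le_div_of_nonneg_left <;> linarith
    linarith
  · rw [Cbf_odd K m (by omega)]

theorem best_fit_uses_K_processors (K : ℕ) (hK : 4 ≤ K) (H : ℝ)
    (hH : (K : ℝ) ^ K < H) :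
    -- even-indexed tasks join processor i/2 = ⌈i/2⌉, which is feasible and has
    -- maximal load among the feasible processors opened so far (best fit)
    (∀ i, 2 ≤ i → i ≤ 2 * K → i % 2 = 0 →
      assign i ≤ i / 2 ∧ feasible K H (assign i) i ∧
      (∀ m, 1 ≤ m → m ≤ i / 2 → feasible K H m i → load K H m i ≤ load K H (assign i) i)) ∧
    -- odd-indexed tasks (i ≥ 3) fit on no processor opened so far,
    -- so a new processor assign i = i/2 + 1 is opened
    (∀ i, 2 ≤ i → i ≤ 2 * K → i % 2 = 1 →
      (∀ m, 1 ≤ m → m ≤ i / 2 → ¬ feasible K H m i) ∧ assign i = i / 2 + 1) ∧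
    -- hence exactly the processors 1, …, K are used
    (Finset.Icc 1 (2 * K)).image assign = Finset.Icc 1 K := by
  have hx4 : (4:ℝ) ≤ (K:ℝ) := by exact_mod_cast hK
  have hx0 : (0:ℝ) < K := by linarith
  have hx1 : (1:ℝ) ≤ K := by linarith
  have hxne : (K:ℝ) ≠ 0 := ne_of_gt hx0
  have hH0 : (0:ℝ) < H := lt_trans (pow_pos hx0 K) hH
  have hHz : (K:ℝ) ^ ((K:ℤ)) < H := by rw [zpow_natCast]; exact hH
  -- generic: x^(a) ≤ H for a ≤ K
  have hpowH : ∀ a : ℤ, a ≤ (K:ℤ) → (K:ℝ) ^ a ≤ H := fun a ha =>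
    (lt_of_le_of_lt (zpow_le_zpow_right₀ hx1 ha) hHz).le
  refine ⟨?_, ?_, ?_⟩
  · -- even tasks
    intro i h2 hle he
    obtain ⟨k, rfl⟩ : ∃ k, i = 2*k := ⟨i/2, by omega⟩
    have hk1 : 1 ≤ k := by omega
    have hkK : k ≤ K := by omega
    have hass : assign (2*k) = k := by unfold assign; omega
    have hDi : Dbf K (2*k) = (K:ℝ) ^ ((k:ℤ) - 1) := Dbf_even K k
    -- load on processor k
    have hload_k : load K H k (2*k) = Cbf K (2*k - 1) := by
      unfold load
      rw [filter_assign k (2*k - 1) hk1, if_neg (by omega), if_pos (by omega),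
        Finset.sum_singleton, hDi, Dbf_odd K k hk1,
        dbfStar_of_le _ _ _ _ le_rfl]
      simp
    have hCpos := Codd_pos K k (by omega) hk1
    have hCle' := Codd_le' K k hK hk1
    have hCle := Codd_le K k (by omega) hk1
    refine ⟨by omega, ⟨?_, ?_⟩, ?_⟩
    · -- demand test on processor k
      rw [hass, hload_k, Cbf_even, hDi]
      linarith
    · -- utilization test on processor k
      rw [hass]
      have hutil : utilLoad K H k (2*k) = Cbf K (2*k - 1) / H := by
        unfold utilLoad
        rw [filter_assign k (2*k - 1) hk1, if_neg (by omega), if_pos (by omega),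
          Finset.sum_singleton, Tbf_odd K H k hk1]
      rw [hutil, Cbf_even, Tbf_even]
      have h1 : (K:ℝ) ^ ((k:ℤ) - 2) / (K:ℝ) ^ ((k:ℤ) - 1) = (K:ℝ)⁻¹ := by
        rw [← zpow_sub₀ hxne, show (k:ℤ) - 2 - ((k:ℤ) - 1) = -1 by ring, zpow_neg_one]
      have hinv : (K:ℝ)⁻¹ ≤ 1/4 := by
        rw [inv_eq_one_div]
        apply div_le_div_of_nonneg_left <;> linarith
      have h2 : Cbf K (2*k - 1) / H ≤ 1/2 := by
        rw [div_le_iff₀ hH0]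
        have h3 : (K:ℝ) ^ ((k:ℤ) - 1) ≤ (K:ℝ) ^ ((K:ℤ) - 1) :=
          zpow_le_zpow_right₀ hx1 (by omega)
        have h4 : (K:ℝ) * (K:ℝ) ^ ((K:ℤ) - 1) = (K:ℝ) ^ (K:ℤ) := by
          rw [show (K:ℤ) = 1 + ((K:ℤ) - 1) by ring, zpow_add₀ hxne, zpow_one]
          ring_nf
        have h5 : (0:ℝ) < (K:ℝ) ^ ((K:ℤ) - 1) := zpow_pos hx0 _
        nlinarith
      rw [h1]
      linarith
    · -- best fit
      intro m hm1 hmk _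
      rw [hass]
      have hmk' : m ≤ k := by omega
      rcases eq_or_lt_of_le hmk' with h | h
      · rw [h]
      · -- m < k, hence k ≥ 2
        have hk2 : 2 ≤ k := by omega
        have hx2 : ∀ a b : ℤ, a ≤ b → (K:ℝ)^a ≤ (K:ℝ)^b :=
          fun a b hab => zpow_le_zpow_right₀ hx1 hab
        have hload_m : load K H m (2*k) =
            dbfStar (Cbf K (2*m-1)) (Tbf K H (2*m-1)) (Dbf K (2*m-1)) (Dbf K (2*k)) +
            dbfStar (Cbf K (2*m)) (Tbf K H (2*m)) (Dbf K (2*m)) (Dbf K (2*k)) := by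
          unfold load
          rw [filter_assign m (2*k - 1) hm1, if_pos (by omega),
            Finset.sum_pair (by omega)]
        -- even part equals x^(k-2)
        have heven : dbfStar (Cbf K (2*m)) (Tbf K H (2*m)) (Dbf K (2*m)) (Dbf K (2*k)) =
            (K:ℝ) ^ ((k:ℤ) - 2) := by
          rw [Cbf_even, Tbf_even, Dbf_even, hDi,
            dbfStar_of_le _ _ _ _ (hx2 _ _ (by omega)),
            even_term (K:ℝ) hx0 (m:ℤ) ((k:ℤ) - 1)]
          congr 1
          ring
        -- odd part is at most 2 x^(k-2)
        have hodd : dbfStar (Cbf K (2*m-1)) (Tbf K H (2*m-1)) (Dbf K (2*m-1)) (Dbf K (2*k)) ≤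
            2 * (K:ℝ) ^ ((k:ℤ) - 2) := by
          rw [Tbf_odd K H m hm1, Dbf_odd K m hm1, hDi,
            dbfStar_of_le _ _ _ _ (hx2 _ _ (by omega))]
          have hfrac : ((K:ℝ) ^ ((k:ℤ) - 1) - (K:ℝ) ^ ((m:ℤ) - 1)) / H + 1 ≤ 2 := by
            have h5 : (K:ℝ) ^ ((k:ℤ) - 1) ≤ H := hpowH _ (by omega)
            have h6 : (0:ℝ) < (K:ℝ) ^ ((m:ℤ) - 1) := zpow_pos hx0 _
            have : ((K:ℝ) ^ ((k:ℤ) - 1) - (K:ℝ) ^ ((m:ℤ) - 1)) / H ≤ 1 := by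
              rw [div_le_one hH0]; linarith
            linarith
          have hfrac0 : (0:ℝ) ≤ ((K:ℝ) ^ ((k:ℤ) - 1) - (K:ℝ) ^ ((m:ℤ) - 1)) / H + 1 := by
            have h6 : (K:ℝ) ^ ((m:ℤ) - 1) ≤ (K:ℝ) ^ ((k:ℤ) - 1) := hx2 _ _ (by omega)
            have := div_nonneg (by linarith :
              (0:ℝ) ≤ (K:ℝ) ^ ((k:ℤ) - 1) - (K:ℝ) ^ ((m:ℤ) - 1)) hH0.le
            linarith
          have hCm := Codd_le K m (by omega) hm1
          have hCmpos := Codd_pos K m (by omega) hm1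
          have hmk2 : (K:ℝ) ^ ((m:ℤ) - 1) ≤ (K:ℝ) ^ ((k:ℤ) - 2) := hx2 _ _ (by omega)
          calc (((K:ℝ) ^ ((k:ℤ) - 1) - (K:ℝ) ^ ((m:ℤ) - 1)) / H + 1) * Cbf K (2*m-1)
              ≤ 2 * Cbf K (2*m-1) := by nlinarith
            _ ≤ 2 * (K:ℝ) ^ ((k:ℤ) - 2) := by nlinarith
        have hxx : (K:ℝ) ^ ((k:ℤ) - 1) = (K:ℝ) * (K:ℝ) ^ ((k:ℤ) - 2) := by
          rw [show (k:ℤ) - 1 = 1 + ((k:ℤ) - 2) by ring, zpow_add₀ hxne, zpow_one]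
        have hpos2 : (0:ℝ) < (K:ℝ) ^ ((k:ℤ) - 2) := zpow_pos hx0 _
        rw [hload_m, hload_k, heven]
        rw [Cbf_odd K k hk2]
        nlinarith
  · -- odd tasks
    intro i h2 hle ho
    obtain ⟨k, rfl⟩ : ∃ k, i = 2*k + 1 := ⟨i/2, by omega⟩
    have hk1 : 1 ≤ k := by omega
    have hkK : k + 1 ≤ K := by omega
    constructor
    · intro m hm1 hmk hfeas
      have hmk' : m ≤ k := by omega
      obtain ⟨h1, -⟩ := hfeas
      have hDi : Dbf K (2*k+1) = (K:ℝ) ^ (k:ℤ) := by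
        rw [show 2*k+1 = 2*(k+1) - 1 by omega, Dbf_odd K (k+1) (by omega),
          show ((k+1:ℕ):ℤ) - 1 = (k:ℤ) by push_cast; ring]
      have hCi : Cbf K (2*k+1) = (K:ℝ) ^ (k:ℤ) - (K:ℝ) ^ ((k:ℤ) - 1) := by
        rw [show 2*k+1 = 2*(k+1) - 1 by omega, Cbf_odd K (k+1) (by omega),
          show ((k+1:ℕ):ℤ) - 1 = (k:ℤ) by push_cast; ring,
          show ((k+1:ℕ):ℤ) - 2 = (k:ℤ) - 1 by push_cast; ring]
      have hx2 : ∀ a b : ℤ, a ≤ b → (K:ℝ)^a ≤ (K:ℝ)^b :=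
        fun a b hab => zpow_le_zpow_right₀ hx1 hab
      have hload_m : load K H m (2*k+1) =
          dbfStar (Cbf K (2*m-1)) (Tbf K H (2*m-1)) (Dbf K (2*m-1)) (Dbf K (2*k+1)) +
          dbfStar (Cbf K (2*m)) (Tbf K H (2*m)) (Dbf K (2*m)) (Dbf K (2*k+1)) := by
        unfold load
        rw [show 2*k+1-1 = 2*k by omega, filter_assign m (2*k) hm1, if_pos (by omega),
          Finset.sum_pair (by omega)]
      have heven : dbfStar (Cbf K (2*m)) (Tbf K H (2*m)) (Dbf K (2*m)) (Dbf K (2*k+1)) =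
          (K:ℝ) ^ ((k:ℤ) - 1) := by
        rw [Cbf_even, Tbf_even, Dbf_even, hDi,
          dbfStar_of_le _ _ _ _ (hx2 _ _ (by omega)),
          even_term (K:ℝ) hx0 (m:ℤ) (k:ℤ)]
      have hodd : Cbf K (2*m-1) ≤
          dbfStar (Cbf K (2*m-1)) (Tbf K H (2*m-1)) (Dbf K (2*m-1)) (Dbf K (2*k+1)) := by
        rw [Tbf_odd K H m hm1, Dbf_odd K m hm1, hDi,
          dbfStar_of_le _ _ _ _ (hx2 _ _ (by omega))]
        have hCmpos := Codd_pos K m (by omega) hm1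
        have hd : (0:ℝ) ≤ ((K:ℝ) ^ (k:ℤ) - (K:ℝ) ^ ((m:ℤ) - 1)) / H := by
          have h6 : (K:ℝ) ^ ((m:ℤ) - 1) ≤ (K:ℝ) ^ (k:ℤ) := hx2 _ _ (by omega)
          exact div_nonneg (by linarith) hH0.le
        nlinarith
      have hCmpos := Codd_pos K m (by omega) hm1
      rw [hCi, hload_m, heven] at h1
      rw [hDi] at h1 hodd
      linarith
    · unfold assign; omega
  · -- image
    ext n
    simp only [Finset.mem_image, Finset.mem_Icc, assign]
    constructor
    · rintro ⟨j, ⟨hj1, hj2⟩, rfl⟩; omega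
    · rintro ⟨h1n, h2n⟩
      exact ⟨2*n, ⟨by omega, by omega⟩, by omega⟩
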